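/- Let Λ be a finite-dimensional k-algebra and suppose {I_i}_{i ∈ ℕ} is an infinite family of pairwise distinct two-sided ideals of Λ such that all quotient algebras Λ/I_i are isomorphic as k-algebras. If Λ/I_1 has a faithful brick of k-dimension d, then Λ admits infinitely many pairwise non-isomorphic bricks of k-dimension d. -/

import Mathlib

open CategoryTheory

/-- A module is a *brick* if its endomorphism ring is a division ring. -/
def IsBrick (R : Type*) (M : Type*) [Ring R] [AddCommGroup M] [Module R M] : Prop :=
  Nontrivial M ∧ ∀ f : Module.End R M, f ≠ 0 → IsUnit f

section

variable (k : Type) [Field k] (Λ : Type) [Ring Λ] [Algebra k Λ]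

/-- The `k`-algebra structure on the quotient of `Λ` by a ring congruence. -/
noncomputable instance quotAlgebra (c : RingCon Λ) : Algebra k c.Quotient :=
  RingHom.toAlgebra' (c.mk'.comp (algebraMap k Λ)) (by
    intro a x
    obtain ⟨y, rfl⟩ : ∃ y, c.mk' y = x := Quotient.mk''_surjective x
    show c.mk' _ * c.mk' y = c.mk' y * c.mk' _
    rw [← map_mul, ← map_mul, Algebra.commutes])

/-- The `k`-dimension of a `Λ`-module, computed via restriction of scalars along
`algebraMap k Λ`. -/
noncomputable def kdim (M : ModuleCat.{0} Λ) : ℕ :=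
  letI : Module k M := Module.compHom M (algebraMap k Λ)
  Module.finrank k M

/-- If `{I_i}_{i ∈ ℕ}` is an infinite family of pairwise distinct two-sided ideals of a
finite-dimensional algebra `Λ` with all quotients `Λ/I_i` isomorphic as `k`-algebras, and
`Λ/I_1` has a faithful brick of `k`-dimension `d`, then `Λ` has infinitely many pairwise
non-isomorphic bricks of `k`-dimension `d`. -/
theorem stmt_3 [FiniteDimensional k Λ]
    (I : ℕ → TwoSidedIdeal Λ) (hinj : Function.Injective I)
    (hiso : ∀ i, Nonempty ((I i).ringCon.Quotient ≃ₐ[k] (I 1).ringCon.Quotient))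
    (d : ℕ)
    (hbrick : ∃ (B : Type) (_ : AddCommGroup B) (_ : Module (I 1).ringCon.Quotient B)
      (_ : Module k B) (_ : IsScalarTower k (I 1).ringCon.Quotient B),
      IsBrick (I 1).ringCon.Quotient B ∧ FaithfulSMul (I 1).ringCon.Quotient B ∧
        Module.finrank k B = d) :
    ∃ B : ℕ → ModuleCat.{0} Λ,
      (∀ i, IsBrick Λ (B i) ∧ kdim k Λ (B i) = d) ∧
      ∀ i j, i ≠ j → IsEmpty (B i ≅ B j) := by
  obtain ⟨B, iAG, iMQ, iMk, iTW, hBr, hF, hd⟩ := hbrick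
  letI := iAG; letI := iMQ; letI := iMk; letI := iTW
  -- the ring homs Λ → Q with kernel I i
  let e : ∀ i, (I i).ringCon.Quotient ≃ₐ[k] (I 1).ringCon.Quotient := fun i => (hiso i).some
  let φ : ℕ → (Λ →+* (I 1).ringCon.Quotient) :=
    fun i => ((e i : (I i).ringCon.Quotient →+* (I 1).ringCon.Quotient)).comp (I i).ringCon.mk'
  have hφsurj : ∀ i, Function.Surjective (φ i) := by
    intro i q
    obtain ⟨p, rfl⟩ := (e i).surjective q
    obtain ⟨x, rfl⟩ : ∃ y, (I i).ringCon.mk' y = p := Quotient.mk''_surjective p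
    exact ⟨x, rfl⟩
  have hker : ∀ i x, φ i x = 0 ↔ x ∈ I i := by
    intro i x
    have h0 : ((I i).ringCon.mk' x = 0) ↔ x ∈ I i := by
      rw [TwoSidedIdeal.mem_iff]
      have : (0 : (I i).ringCon.Quotient) = (I i).ringCon.mk' 0 := (map_zero _).symm
      rw [this]
      exact RingCon.eq _
    rw [← h0]
    constructor
    · intro h
      apply (e i).injective
      rw [map_zero]
      exact h
    · intro h
      show (e i) ((I i).ringCon.mk' x) = 0
      rw [h, map_zero]
  have hφalg : ∀ i (a : k), φ i (algebraMap k Λ a) = algebraMap k (I 1).ringCon.Quotient a := by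
    intro i a
    show (e i) ((I i).ringCon.mk' (algebraMap k Λ a)) = _
    have : (I i).ringCon.mk' (algebraMap k Λ a) = algebraMap k (I i).ringCon.Quotient a := rfl
    rw [this, AlgEquiv.commutes]
  -- the modules
  let mod : ∀ i, Module Λ B := fun i => Module.compHom B (φ i)
  let BB : ℕ → ModuleCat.{0} Λ := fun i => @ModuleCat.of Λ _ B _ (mod i)
  refine ⟨BB, fun i => ⟨⟨hBr.1, ?_⟩, ?_⟩, ?_⟩
  · -- brick
    intro f hf
    letI := mod i
    -- promote f to a Q-linear endomorphism
    let f' : Module.End (I 1).ringCon.Quotient B :=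
      { toFun := f
        map_add' := f.map_add
        map_smul' := by
          intro q m
          obtain ⟨x, rfl⟩ := hφsurj i q
          exact f.map_smul x m }
    have hf' : f' ≠ 0 := by
      intro h
      apply hf
      ext m
      exact congrFun (congrArg DFunLike.coe h) m
    have := hBr.2 f' hf'
    rw [Module.End.isUnit_iff] at this ⊢
    exact this
  · -- dimension
    letI := mod i
    have heq : ∀ (a : k) (m : B), (φ i (algebraMap k Λ a)) • m = a • m := by
      intro a m
      rw [hφalg i]
      have h1 : a • (1 : (I 1).ringCon.Quotient) = algebraMap k (I 1).ringCon.Quotient a := by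
        have h0 : ((algebraMap k Λ a : Λ) : (I 1).ringCon.Quotient)
            = algebraMap k (I 1).ringCon.Quotient a := rfl
        rw [← h0, Algebra.algebraMap_eq_smul_one, RingCon.coe_smul]
        norm_cast
      have h2 := @IsScalarTower.smul_assoc k ((I 1).ringCon.Quotient) B _ _ _ iTW a 1 m
      rw [h1, one_smul] at h2
      exact h2
    have hMeq : (Module.compHom B (algebraMap k Λ) : Module k B) = iMk :=
      Module.ext' _ _ (fun a m => heq a m)
    show @Module.finrank k B _ _ (Module.compHom B (algebraMap k Λ)) = d
    rw [hMeq]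
    exact hd
  · -- pairwise non-isomorphic
    intro i j hij
    constructor
    intro iso
    apply hij
    apply hinj
    letI instBB : ∀ n, Module Λ (BB n) := fun n => (BB n).isModule
    let ℓ : (BB i) ≃ₗ[Λ] (BB j) := iso.toLinearEquiv
    ext x
    have hBBsmul : ∀ n (y : Λ) (m : (BB n)), y • m = φ n y • (show B from m) := fun _ _ _ => rfl
    have key : ∀ n (y : Λ), y ∈ I n ↔ ∀ m : (BB n), y • m = 0 := by
      intro n y
      rw [← hker n y]
      constructor
      · intro h m
        rw [hBBsmul, h, zero_smul]
      · intro h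
        refine FaithfulSMul.eq_of_smul_eq_smul (M := (I 1).ringCon.Quotient) (α := B)
          (fun m => ?_)
        rw [zero_smul]
        have := h m
        rw [hBBsmul] at this
        exact this
    rw [key i, key j]
    constructor
    · intro h m
      have h1 := h (ℓ.symm m)
      have h2 : ℓ (x • (ℓ.symm m)) = x • m := by
        rw [ℓ.map_smul, ℓ.apply_symm_apply]
      rw [h1, map_zero] at h2
      exact h2.symm
    · intro h m
      have h1 := h (ℓ m)
      apply ℓ.injective
      rw [ℓ.map_smul, h1, map_zero]

end
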